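/- If two simple closure spaces L₁ and L₂ each contain MO₃ (i.e., there exist in each L_i three atoms p_i, q_i, r_i such that p_i ∨ q_i covers p_i, q_i and r_i), then the box product L₁ ⊼ L₂ is strictly smaller than the Fraser product L₁ ⊻ L₂. -/
import Mathlib


open Set

/-- A simple closure space on `σ`: a family of subsets closed under arbitrary
intersections (the empty intersection giving `univ`), containing `∅` and all singletons. -/
def IsSCS {σ : Type*} (L : Set (Set σ)) : Prop :=
  (∀ ω ⊆ L, ⋂₀ ω ∈ L) ∧ (∅ : Set σ) ∈ L ∧ ∀ p : σ, {p} ∈ L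

/-- The join of a subset `A` of atoms/points in a simple closure space `L`. -/
def sJoin {σ : Type*} (L : Set (Set σ)) (A : Set σ) : Set σ := ⋂₀ {b ∈ L | A ⊆ b}

/-- `b` covers `a` in `L`. -/
def CoversIn {σ : Type*} (L : Set (Set σ)) (a b : Set σ) : Prop :=
  a ⊂ b ∧ ∀ c ∈ L, a ⊆ c → c ⊆ b → c = a ∨ c = b

/-- `x` is a coatom of `L`. -/
def IsCoatomOf {σ : Type*} (L : Set (Set σ)) (x : Set σ) : Prop :=
  x ∈ L ∧ x ≠ univ ∧ ∀ c ∈ L, x ⊆ c → c = x ∨ c = univ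

/-- `L` is coatomistic: every element is a meet of coatoms. -/
def Coatomistic {σ : Type*} (L : Set (Set σ)) : Prop :=
  ∀ a ∈ L, a = ⋂₀ {x | IsCoatomOf L x ∧ a ⊆ x}

/-- Covering property: for any atom `p` and `a ∈ L` with `p ∧ a = 0`,
`p ∨ a` covers `a`. -/
def HasCovProp {σ : Type*} (L : Set (Set σ)) : Prop :=
  ∀ p : σ, ∀ a ∈ L, p ∉ a → CoversIn L a (sJoin L (insert p a))

/-- Covering property of the dual lattice of `L`. -/
def HasDualCovProp {σ : Type*} (L : Set (Set σ)) : Prop :=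
  ∀ x, IsCoatomOf L x → ∀ a ∈ L, sJoin L (x ∪ a) = univ → CoversIn L (x ∩ a) a

/-- `f` is an orthocomplementation of `L`: an order-reversing involution with
`a ∨ f a = 1` for all `a ∈ L`. -/
def IsOrthoOn {σ : Type*} (L : Set (Set σ)) (f : Set σ → Set σ) : Prop :=
  (∀ a ∈ L, f a ∈ L) ∧ (∀ a ∈ L, f (f a) = a) ∧
  (∀ a ∈ L, ∀ b ∈ L, a ⊆ b → f b ⊆ f a) ∧
  (∀ a ∈ L, ∀ b ∈ L, a ∪ f a ⊆ b → b = univ)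

/-- The permutation `g` of the points induces an automorphism of `L`. -/
def IsAutoOn {σ : Type*} (L : Set (Set σ)) (g : Equiv.Perm σ) : Prop :=
  ∀ a, a ∈ L ↔ g '' a ∈ L

/-- `L` contains `MO₃`: three distinct atoms `p, q, r` such that `p ∨ q`
covers each of them. -/
def ContainsMO3 {σ : Type*} (L : Set (Set σ)) : Prop :=
  ∃ p q r : σ, p ≠ q ∧ p ≠ r ∧ q ≠ r ∧
    CoversIn L {p} (sJoin L {p, q}) ∧ CoversIn L {q} (sJoin L {p, q}) ∧
    CoversIn L {r} (sJoin L {p, q})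

/-- `L` contains `MO₄`: four distinct atoms `p, q, r, s` such that `p ∨ q`
covers each of them. -/
def ContainsMO4 {σ : Type*} (L : Set (Set σ)) : Prop :=
  ∃ p q r s : σ, p ≠ q ∧ p ≠ r ∧ p ≠ s ∧ q ≠ r ∧ q ≠ s ∧ r ≠ s ∧
    CoversIn L {p} (sJoin L {p, q}) ∧ CoversIn L {q} (sJoin L {p, q}) ∧
    CoversIn L {r} (sJoin L {p, q}) ∧ CoversIn L {s} (sJoin L {p, q})

/-- A connected covering of the point set of `L`. -/
def IsConnCover {σ : Type*} (L : Set (Set σ)) (𝒜 : Set (Set σ)) : Prop :=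
  ⋃₀ 𝒜 = Set.univ ∧
  (∀ A ∈ 𝒜, ∃ p q : σ, p ∈ A ∧ q ∈ A ∧ p ≠ q) ∧
  (∀ A ∈ 𝒜, ∀ p ∈ A, ∀ q ∈ A, p ≠ q → ∃ r, r ∈ sJoin L {p, q} ∧ r ≠ p ∧ r ≠ q) ∧
  (∀ p q : σ, ∃ n : ℕ, ∃ c : Fin (n + 1) → Set σ, (∀ i, c i ∈ 𝒜) ∧
    p ∈ c 0 ∧ q ∈ c (Fin.last n) ∧
    ∀ i : Fin n, ∃ x y : σ, x ≠ y ∧ (x ∈ c i.castSucc ∧ x ∈ c i.succ) ∧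
      (y ∈ c i.castSucc ∧ y ∈ c i.succ))

/-- `L` is weakly connected: `L ≠ 2` and there is a connected covering. -/
def WeaklyConnected {σ : Type*} (L : Set (Set σ)) : Prop :=
  (∃ p q : σ, p ≠ q) ∧ ∃ 𝒜, IsConnCover L 𝒜

/-- Restriction of `L` to the subset `e`, as a family of subsets of `↥e`. -/
def restrictCS {σ : Type*} (L : Set (Set σ)) (e : Set σ) : Set (Set e) :=
  {B | ∃ a ∈ L, a ⊆ e ∧ B = Subtype.val ⁻¹' a}

/-- Center of an orthocomplemented simple closure space: elements whose
orthocomplement is the set complement. -/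
def centerOf {σ : Type*} (L : Set (Set σ)) (f : Set σ → Set σ) : Set (Set σ) :=
  {a ∈ L | f a = aᶜ}

/-- Central cover of a point `p`. -/
def centralCover {σ : Type*} (L : Set (Set σ)) (f : Set σ → Set σ) (p : σ) : Set σ :=
  ⋂₀ {a ∈ centerOf L f | p ∈ a}

section Family

variable {Ω : Type*} {X : Ω → Type*}

/-- `⋃_α π_α⁻¹ (a α)`. -/
def cylUnion (a : ∀ α, Set (X α)) : Set (∀ α, X α) := {p | ∃ α, p α ∈ a α}

/-- `p[B, β]`: the point `p` with its `β`-th coordinate varying over `B`. -/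
def pSub (p : ∀ α, X α) (β : Ω) (B : Set (X β)) : Set (∀ α, X α) :=
  {q | q β ∈ B ∧ ∀ α, α ≠ β → q α = p α}

/-- The section `R_β[p]` of `R ⊆ ∏_α X α`. -/
def sect (R : Set (∀ α, X α)) (β : Ω) (p : ∀ α, X α) : Set (X β) :=
  {q | ∃ r ∈ R, r β = q ∧ ∀ α, α ≠ β → r α = p α}

/-- The box product `⊼_α L_α`: all nonempty intersections of the sets
`⋃_α π_α⁻¹ (a α)`. -/
def boxProd (L : ∀ α, Set (Set (X α))) : Set (Set (∀ α, X α)) :=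
  {A | ∃ ω ⊆ {B | ∃ a : ∀ α, Set (X α), (∀ α, a α ∈ L α) ∧ B = cylUnion a},
    ω.Nonempty ∧ A = ⋂₀ ω}

/-- The Fraser product `⊻_α L_α`: all `R` whose sections all lie in the factors. -/
def fraserProd (L : ∀ α, Set (Set (X α))) : Set (Set (∀ α, X α)) :=
  {R | ∀ β, ∀ p : ∀ α, X α, sect R β p ∈ L β}

/-- `M` is a weak tensor product of the family `L`: axioms P1–P3. -/
def IsWTP (L : ∀ α, Set (Set (X α))) (M : Set (Set (∀ α, X α))) : Prop :=
  IsSCS M ∧ (∀ a : ∀ α, Set (X α), (∀ α, a α ∈ L α) → cylUnion a ∈ M) ∧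
  (∀ p : ∀ α, X α, ∀ β, ∀ B : Set (X β), pSub p β B ∈ M → B ∈ L β)

/-- The closure operator `⋁_β R = ⋃_p p[⋁ R_β[p]]`. -/
def vJoin (L : ∀ α, Set (Set (X α))) (β : Ω) (R : Set (∀ α, X α)) : Set (∀ α, X α) :=
  ⋃ p : ∀ α, X α, pSub p β (sJoin (L β) (sect R β p))

/-- The orthocomplementation `#` induced on the box product by
orthocomplementations of the factors. -/
def sharp (f : ∀ α, Set (X α) → Set (X α)) (a : Set (∀ α, X α)) : Set (∀ α, X α) :=
  {p | ∀ q ∈ a, ∃ α, p α ∈ f α {q α}}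

end Family

section Binary

variable {X₁ X₂ : Type*}

/-- `a₁ × Σ₂ ∪ Σ₁ × a₂`. -/
def cylUnion₂ (a₁ : Set X₁) (a₂ : Set X₂) : Set (X₁ × X₂) := {p | p.1 ∈ a₁ ∨ p.2 ∈ a₂}

/-- Binary box product. -/
def boxProd₂ (L₁ : Set (Set X₁)) (L₂ : Set (Set X₂)) : Set (Set (X₁ × X₂)) :=
  {A | ∃ ω ⊆ {B | ∃ a₁ ∈ L₁, ∃ a₂ ∈ L₂, B = cylUnion₂ a₁ a₂}, ω.Nonempty ∧ A = ⋂₀ ω}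

/-- Binary Fraser product. -/
def fraserProd₂ (L₁ : Set (Set X₁)) (L₂ : Set (Set X₂)) : Set (Set (X₁ × X₂)) :=
  {R | (∀ p₁, {q | (p₁, q) ∈ R} ∈ L₂) ∧ (∀ p₂, {q | (q, p₂) ∈ R} ∈ L₁)}

/-- Binary weak tensor product: axioms P1–P3. -/
def IsWTP₂ (L₁ : Set (Set X₁)) (L₂ : Set (Set X₂)) (M : Set (Set (X₁ × X₂))) : Prop :=
  IsSCS M ∧ (∀ a₁ ∈ L₁, ∀ a₂ ∈ L₂, cylUnion₂ a₁ a₂ ∈ M) ∧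
  (∀ p₁ : X₁, ∀ A₂ : Set X₂, {p₁} ×ˢ A₂ ∈ M → A₂ ∈ L₂) ∧
  (∀ p₂ : X₂, ∀ A₁ : Set X₁, A₁ ×ˢ {p₂} ∈ M → A₁ ∈ L₁)

/-- The simple closure space `MO_Σ`, containing only `∅`, `Σ` and the singletons. -/
def MOspace (X : Type*) : Set (Set X) := {∅, univ} ∪ {A | ∃ p, A = {p}}

end Binary

lemma sJoin_mem' {σ : Type*} {L : Set (Set σ)} (h : IsSCS L) (A : Set σ) :
    sJoin L A ∈ L := h.1 _ (fun _ hb => hb.1)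

lemma subset_sJoin' {σ : Type*} (L : Set (Set σ)) (A : Set σ) : A ⊆ sJoin L A :=
  fun _ hx => Set.mem_sInter.2 (fun _ hb => hb.2 hx)

lemma sJoin_subset' {σ : Type*} {L : Set (Set σ)} {A b : Set σ}
    (hb : b ∈ L) (hA : A ⊆ b) : sJoin L A ⊆ b :=
  Set.sInter_subset_of_mem ⟨hb, hA⟩

lemma univ_mem_scs {σ : Type*} {L : Set (Set σ)} (h : IsSCS L) : (univ : Set σ) ∈ L := by
  have := h.1 ∅ (empty_subset _); simpa using this

lemma mo3_key {σ : Type*} {L : Set (Set σ)} (h : IsSCS L) {p q r : σ}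
    (hqr : q ≠ r)
    (hq : CoversIn L {q} (sJoin L {p, q}))
    (hr : CoversIn L {r} (sJoin L {p, q})) :
    p ∈ sJoin L {q, r} := by
  have hrmem : r ∈ sJoin L {p, q} := hr.1.subset rfl
  set c := sJoin L {q, r} with hc
  have hcL : c ∈ L := sJoin_mem' h _
  have hqc : ({q} : Set σ) ⊆ c := by
    intro x hx; rw [hx]
    exact subset_sJoin' L _ (Or.inl rfl)
  have hcpq : c ⊆ sJoin L {p, q} := by
    apply sJoin_subset' (sJoin_mem' h _)
    intro x hx
    rcases hx with hx | hx
    · rw [hx]; exact subset_sJoin' L _ (Or.inr rfl)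
    · rw [hx]; exact hrmem
  rcases hq.2 c hcL hqc hcpq with h1 | h2
  · exfalso
    have : r ∈ c := subset_sJoin' L _ (Or.inr rfl)
    rw [h1] at this
    exact hqr this.symm
  · show p ∈ c
    rw [h2]
    exact subset_sJoin' L _ (Or.inl rfl)

/-- if `L₁` and `L₂` both contain `MO₃`, then the box product is strictly
smaller than the Fraser product. -/
theorem stmt_9 {X₁ X₂ : Type*} (L₁ : Set (Set X₁)) (L₂ : Set (Set X₂))
    (h₁ : IsSCS L₁) (h₂ : IsSCS L₂) (m₁ : ContainsMO3 L₁) (m₂ : ContainsMO3 L₂) :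
    boxProd₂ L₁ L₂ ⊂ fraserProd₂ L₁ L₂ := by
  obtain ⟨p₁, q₁, r₁, hpq1, hpr1, hqr1, hcp1, hcq1, hcr1⟩ := m₁
  obtain ⟨p₂, q₂, r₂, hpq2, hpr2, hqr2, hcp2, hcq2, hcr2⟩ := m₂
  have hsub : boxProd₂ L₁ L₂ ⊆ fraserProd₂ L₁ L₂ := by
    rintro A ⟨ω, hω, hne, rfl⟩
    constructor
    · intro x
      have heq : {y | (x, y) ∈ ⋂₀ ω} = ⋂₀ {s | ∃ B ∈ ω, s = {y | (x, y) ∈ B}} := by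
        ext y
        constructor
        · rintro h s ⟨B, hB, rfl⟩
          exact h B hB
        · intro h B hB
          exact h _ ⟨B, hB, rfl⟩
      rw [heq]
      apply h₂.1
      rintro s ⟨B, hB, rfl⟩
      obtain ⟨a₁, ha₁, a₂, ha₂, rfl⟩ := hω hB
      by_cases hx : x ∈ a₁
      · have : {y | (x, y) ∈ cylUnion₂ a₁ a₂} = univ := by
          ext y; simp [cylUnion₂, hx]
        rw [this]; exact univ_mem_scs h₂
      · have : {y | (x, y) ∈ cylUnion₂ a₁ a₂} = a₂ := by
          ext y; simp [cylUnion₂, hx]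
        rw [this]; exact ha₂
    · intro x
      have heq : {y | (y, x) ∈ ⋂₀ ω} = ⋂₀ {s | ∃ B ∈ ω, s = {y | (y, x) ∈ B}} := by
        ext y
        constructor
        · rintro h s ⟨B, hB, rfl⟩
          exact h B hB
        · intro h B hB
          exact h _ ⟨B, hB, rfl⟩
      rw [heq]
      apply h₁.1
      rintro s ⟨B, hB, rfl⟩
      obtain ⟨a₁, ha₁, a₂, ha₂, rfl⟩ := hω hB
      by_cases hx : x ∈ a₂
      · have : {y | (y, x) ∈ cylUnion₂ a₁ a₂} = univ := by
          ext y; simp [cylUnion₂, hx]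
        rw [this]; exact univ_mem_scs h₁
      · have : {y | (y, x) ∈ cylUnion₂ a₁ a₂} = a₁ := by
          ext y; simp [cylUnion₂, hx]
        rw [this]; exact ha₁
  set R : Set (X₁ × X₂) := {(p₁, p₂), (q₁, q₂), (r₁, r₂)} with hRdef
  have hRf : R ∈ fraserProd₂ L₁ L₂ := by
    constructor
    · intro x
      by_cases hx1 : x = p₁
      · have : {q | (x, q) ∈ R} = {p₂} := by
          ext y; simp [hRdef, Prod.ext_iff, hx1, hpq1, hpr1]
        rw [this]; exact h₂.2.2 p₂
      · by_cases hx2 : x = q₁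
        · have : {q | (x, q) ∈ R} = {q₂} := by
            ext y; simp [hRdef, Prod.ext_iff, hx2, hpq1.symm, hqr1]
          rw [this]; exact h₂.2.2 q₂
        · by_cases hx3 : x = r₁
          · have : {q | (x, q) ∈ R} = {r₂} := by
              ext y; simp [hRdef, Prod.ext_iff, hx3, hpr1.symm, hqr1.symm]
            rw [this]; exact h₂.2.2 r₂
          · have : {q | (x, q) ∈ R} = ∅ := by
              ext y; simp [hRdef, Prod.ext_iff, hx1, hx2, hx3]
            rw [this]; exact h₂.2.1
    · intro x
      by_cases hx1 : x = p₂
      · have : {q | (q, x) ∈ R} = {p₁} := by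
          ext y; simp [hRdef, Prod.ext_iff, hx1, hpq2, hpr2]
        rw [this]; exact h₁.2.2 p₁
      · by_cases hx2 : x = q₂
        · have : {q | (q, x) ∈ R} = {q₁} := by
            ext y; simp [hRdef, Prod.ext_iff, hx2, hpq2.symm, hqr2]
          rw [this]; exact h₁.2.2 q₁
        · by_cases hx3 : x = r₂
          · have : {q | (q, x) ∈ R} = {r₁} := by
              ext y; simp [hRdef, Prod.ext_iff, hx3, hpr2.symm, hqr2.symm]
            rw [this]; exact h₁.2.2 r₁
          · have : {q | (q, x) ∈ R} = ∅ := by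
              ext y; simp [hRdef, Prod.ext_iff, hx1, hx2, hx3]
            rw [this]; exact h₁.2.1
  have hRb : R ∉ boxProd₂ L₁ L₂ := by
    rintro ⟨ω, hω, hne, hR⟩
    have hp : (p₁, p₂) ∈ ⋂₀ ω := by rw [← hR]; exact Or.inl rfl
    have hq : (q₁, q₂) ∈ ⋂₀ ω := by rw [← hR]; exact Or.inr (Or.inl rfl)
    have hr : (r₁, r₂) ∈ ⋂₀ ω := by rw [← hR]; exact Or.inr (Or.inr rfl)
    have hkey : (p₁, r₂) ∈ ⋂₀ ω := by
      intro B hB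
      obtain ⟨a₁, ha₁, a₂, ha₂, rfl⟩ := hω hB
      by_contra hcon
      simp only [cylUnion₂, Set.mem_setOf_eq, not_or] at hcon
      obtain ⟨hp1na, hr2na⟩ := hcon
      have hp2a : p₂ ∈ a₂ := (hp _ hB).resolve_left hp1na
      have hr1a : r₁ ∈ a₁ := (hr _ hB).resolve_right hr2na
      rcases hq _ hB with hq1a | hq2a
      · have : p₁ ∈ sJoin L₁ {q₁, r₁} := mo3_key h₁ hqr1 hcq1 hcr1
        have hsub' : sJoin L₁ {q₁, r₁} ⊆ a₁ := by
          apply sJoin_subset' ha₁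
          intro x hx
          rcases hx with hx | hx
          · rw [hx]; exact hq1a
          · rw [hx]; exact hr1a
        exact hp1na (hsub' this)
      · have : r₂ ∈ sJoin L₂ {p₂, q₂} := hcr2.1.subset rfl
        have hsub' : sJoin L₂ {p₂, q₂} ⊆ a₂ := by
          apply sJoin_subset' ha₂
          intro x hx
          rcases hx with hx | hx
          · rw [hx]; exact hp2a
          · rw [hx]; exact hq2a
        exact hr2na (hsub' this)
    rw [← hR] at hkey
    rcases hkey with h | h | h
    · exact hpr2 (congrArg Prod.snd h).symm
    · exact hpq1 (congrArg Prod.fst h)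
    · exact hpr1 (congrArg Prod.fst h)
  exact (Set.ssubset_iff_of_subset hsub).2 ⟨R, hRf, hRb⟩
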